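/- Lehmer's polynomial L(x) = x^{10} + x^9 − x^7 − x^6 − x^5 − x^4 − x^3 + x + 1 has exactly one root of absolute value greater than 1, and its Mahler measure M(L) equals that root's absolute value, which lies strictly between 1.17 and 1.18. -/

import Mathlib

open Polynomial

/-- Lehmer's polynomial (as a polynomial over `ℂ`). -/
noncomputable def lehmer : Polynomial ℂ :=
  X ^ 10 + X ^ 9 - X ^ 7 - X ^ 6 - X ^ 5 - X ^ 4 - X ^ 3 + X + 1

/-- Lehmer's polynomial as a polynomial over `ℝ`. -/
noncomputable def lehmerR : Polynomial ℝ :=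
  X ^ 10 + X ^ 9 - X ^ 7 - X ^ 6 - X ^ 5 - X ^ 4 - X ^ 3 + X + 1

/-- The "trace polynomial" `p` with `x⁻⁵ L(x) = p (x + x⁻¹)`. -/
noncomputable def pR : Polynomial ℝ :=
  X ^ 5 + X ^ 4 - C 5 * X ^ 3 - C 5 * X ^ 2 + C 4 * X + C 3

lemma pR_eval (t : ℝ) : pR.eval t = t^5 + t^4 - 5*t^3 - 5*t^2 + 4*t + 3 := by
  simp [pR]

lemma lehmerR_eval (t : ℝ) :
    lehmerR.eval t = t^10 + t^9 - t^7 - t^6 - t^5 - t^4 - t^3 + t + 1 := by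
  simp [lehmerR]

lemma key_id (x : ℝ) (hx : x ≠ 0) :
    x ^ 5 * pR.eval (x + x⁻¹) = lehmerR.eval x := by
  rw [pR_eval, lehmerR_eval]; field_simp; ring

lemma ivt_poly (q : Polynomial ℝ) {a b : ℝ} (hab : a ≤ b) (ha : q.eval a < 0)
    (hb : 0 < q.eval b) : ∃ y ∈ Set.Ioo a b, q.eval y = 0 := by
  have h := intermediate_value_Ioo hab (q.continuous_aeval).continuousOn
  obtain ⟨y, hy, hy0⟩ := h (Set.mem_Ioo.2 ⟨ha, hb⟩)
  exact ⟨y, hy, by simpa using hy0⟩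

lemma ivt_poly' (q : Polynomial ℝ) {a b : ℝ} (hab : a ≤ b) (ha : 0 < q.eval a)
    (hb : q.eval b < 0) : ∃ y ∈ Set.Ioo a b, q.eval y = 0 := by
  have h := intermediate_value_Ioo' hab (q.continuous_aeval).continuousOn
  obtain ⟨y, hy, hy0⟩ := h (Set.mem_Ioo.2 ⟨hb, ha⟩)
  exact ⟨y, hy, by simpa using hy0⟩

lemma pR_fac {y1 y2 y3 y4 y5 : ℝ}
    (h1 : pR.eval y1 = 0) (h2 : pR.eval y2 = 0) (h3 : pR.eval y3 = 0)
    (h4 : pR.eval y4 = 0) (h5 : pR.eval y5 = 0)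
    (hd : y1 < y2 ∧ y2 < y3 ∧ y3 < y4 ∧ y4 < y5) :
    pR = (X - C y1) * (X - C y2) * (X - C y3) * (X - C y4) * (X - C y5) := by
  obtain ⟨h12, h23, h34, h45⟩ := hd
  set Q : Polynomial ℝ := (X - C y1) * (X - C y2) * (X - C y3) * (X - C y4) * (X - C y5)
    with hQ
  have hmQ : Q.Monic := ((((monic_X_sub_C y1).mul (monic_X_sub_C y2)).mul
    (monic_X_sub_C y3)).mul (monic_X_sub_C y4)).mul (monic_X_sub_C y5)
  have hdQ : Q.degree = 5 := by
    rw [hQ]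
    rw [degree_mul, degree_mul, degree_mul, degree_mul]
    simp [degree_X_sub_C]
    rfl
  have hmp : pR.Monic := by unfold pR; monicity!
  have hdp : pR.degree = 5 := by unfold pR; compute_degree!
  have hsub : pR - Q = 0 := by
    by_contra hne
    have hdeg : (pR - Q).degree < pR.degree :=
      degree_sub_lt (hdp.trans hdQ.symm) hmp.ne_zero (by rw [hmp.leadingCoeff, hmQ.leadingCoeff])
    have hnd : (pR - Q).natDegree < 5 := by
      have := (natDegree_lt_iff_degree_lt hne).2 (by rw [hdp] at hdeg; exact_mod_cast hdeg)
      exact_mod_cast this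
    have hcard : ({y1, y2, y3, y4, y5} : Finset ℝ).card = 5 := by
      rw [Finset.card_insert_of_notMem, Finset.card_insert_of_notMem,
        Finset.card_insert_of_notMem, Finset.card_insert_of_notMem, Finset.card_singleton]
      · simp only [Finset.mem_singleton]; exact ne_of_lt h45
      · simp only [Finset.mem_insert, Finset.mem_singleton]; push_neg
        exact ⟨ne_of_lt h34, ne_of_lt (by linarith)⟩
      · simp only [Finset.mem_insert, Finset.mem_singleton]; push_neg
        exact ⟨ne_of_lt h23, ne_of_lt (by linarith), ne_of_lt (by linarith)⟩
      · simp only [Finset.mem_insert, Finset.mem_singleton]; push_neg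
        exact ⟨ne_of_lt h12, ne_of_lt (by linarith), ne_of_lt (by linarith),
          ne_of_lt (by linarith)⟩
    have heval : ∀ i ∈ ({y1, y2, y3, y4, y5} : Finset ℝ), (pR - Q).eval i = 0 := by
      intro i hi
      simp only [Finset.mem_insert, Finset.mem_singleton] at hi
      rcases hi with rfl | rfl | rfl | rfl | rfl <;>
        simp only [eval_sub, hQ, eval_mul, eval_X, eval_C, sub_self, zero_mul, mul_zero] <;>
        simp [h1, h2, h3, h4, h5]
    have := eq_zero_of_natDegree_lt_card_of_eval_eq_zero' (pR - Q) _ heval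
      (by rw [hcard]; exact hnd)
    exact hne this
  exact sub_eq_zero.mp hsub

lemma lehmerR_fac {y1 y2 y3 y4 y5 : ℝ}
    (hfac : pR = (X - C y1) * (X - C y2) * (X - C y3) * (X - C y4) * (X - C y5)) :
    lehmerR = (X^2 - C y1 * X + 1) * (X^2 - C y2 * X + 1) * (X^2 - C y3 * X + 1) *
      (X^2 - C y4 * X + 1) * (X^2 - C y5 * X + 1) := by
  apply eq_of_infinite_eval_eq
  apply Set.Infinite.mono (s := Set.Ioi (0:ℝ)) ?_ (Set.Ioi_infinite 0)
  intro x hx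
  have hx0 : x ≠ 0 := ne_of_gt hx
  have hkey := key_id x hx0
  have hp : pR.eval (x + x⁻¹) =
      (x + x⁻¹ - y1) * (x + x⁻¹ - y2) * (x + x⁻¹ - y3) * (x + x⁻¹ - y4) * (x + x⁻¹ - y5) := by
    rw [hfac]; simp [eval_mul]
  show lehmerR.eval x = _
  rw [← hkey, hp]
  simp only [eval_mul, eval_add, eval_sub, eval_pow, eval_X, eval_C, eval_one]
  field_simp
  ring

lemma quad_fac (a b : ℂ) :
    (X - C a) * (X - C b) = X^2 - C (a + b) * X + C (a * b) := by
  simp only [C_add, C_mul]; ring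

lemma abs_one_mk (a b : ℝ) (h : a * a + b * b = 1) : ‖(⟨a, b⟩ : ℂ)‖ = 1 := by
  rw [Complex.norm_def, Complex.normSq_mk, h]
  exact Real.sqrt_one

lemma quad_fac_unit (y s : ℝ) (hs : s^2 = 4 - y^2) :
    (X^2 - C (y:ℂ) * X + 1 : Polynomial ℂ)
      = (X - C ⟨y/2, s/2⟩) * (X - C ⟨y/2, -(s/2)⟩) := by
  rw [quad_fac]
  have h1 : (⟨y/2, s/2⟩ : ℂ) + ⟨y/2, -(s/2)⟩ = (y:ℂ) := by
    apply Complex.ext <;> simp [Complex.add_re, Complex.add_im]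
  have h2 : (⟨y/2, s/2⟩ : ℂ) * ⟨y/2, -(s/2)⟩ = 1 := by
    apply Complex.ext <;>
      simp [Complex.mul_re, Complex.mul_im, Complex.one_re, Complex.one_im] <;> nlinarith [hs]
  rw [h1, h2, C_1]

set_option maxHeartbeats 2000000 in
/-- Lehmer's polynomial has exactly one root of absolute value greater than `1`;
its Mahler measure `∏ max(|r_j|,1)` equals that root's absolute value, which lies
strictly between `1.17` and `1.18`. -/
theorem lehmer_mahler :
    ∃ r ∈ lehmer.roots, 1 < ‖r‖ ∧
      (∀ s ∈ lehmer.roots, 1 < ‖s‖ → s = r) ∧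
      (lehmer.roots.map fun z => max (‖z‖) 1).prod = ‖r‖ ∧
      1.17 < ‖r‖ ∧ ‖r‖ < 1.18 := by
  -- four roots of pR in (-2, 2)
  obtain ⟨y1, ⟨hy1a, hy1b⟩, hy1⟩ := ivt_poly pR (by norm_num : (-2:ℝ) ≤ -1.8)
    (by rw [pR_eval]; norm_num) (by rw [pR_eval]; norm_num)
  obtain ⟨y2, ⟨hy2a, hy2b⟩, hy2⟩ := ivt_poly' pR (by norm_num : (-1.5:ℝ) ≤ -1.2)
    (by rw [pR_eval]; norm_num) (by rw [pR_eval]; norm_num)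
  obtain ⟨y3, ⟨hy3a, hy3b⟩, hy3⟩ := ivt_poly pR (by norm_num : (-0.7:ℝ) ≤ -0.5)
    (by rw [pR_eval]; norm_num) (by rw [pR_eval]; norm_num)
  obtain ⟨y4, ⟨hy4a, hy4b⟩, hy4⟩ := ivt_poly' pR (by norm_num : (0.8:ℝ) ≤ 1)
    (by rw [pR_eval]; norm_num) (by rw [pR_eval]; norm_num)
  -- the root of lehmerR in (1.17, 1.18)
  obtain ⟨σ, ⟨hσa, hσb⟩, hσ⟩ := ivt_poly lehmerR (by norm_num : (1.17:ℝ) ≤ 1.18)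
    (by rw [lehmerR_eval]; norm_num) (by rw [lehmerR_eval]; norm_num)
  have hσ1 : 1 < σ := by linarith
  have hσpos : 0 < σ := by linarith
  have hσne : σ ≠ 0 := ne_of_gt hσpos
  set y5 : ℝ := σ + σ⁻¹ with hy5def
  have hy5 : pR.eval y5 = 0 := by
    have hk := key_id σ hσne
    rw [hσ] at hk
    have h5 : σ ^ 5 ≠ 0 := pow_ne_zero _ hσne
    exact (mul_eq_zero.mp hk).resolve_left h5
  have hy5gt2 : 2 < y5 := by
    have h : σ * (y5 - 2) = (σ - 1)^2 := by rw [hy5def]; field_simp; ring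
    nlinarith [sq_nonneg (σ - 1)]
  have hfac := pR_fac hy1 hy2 hy3 hy4 hy5
    ⟨by linarith, by linarith, by linarith, by linarith⟩
  have hLfac := lehmerR_fac hfac
  -- three square roots
  set s1 := Real.sqrt (4 - y1^2) with hs1def
  set s2 := Real.sqrt (4 - y2^2) with hs2def
  set s3 := Real.sqrt (4 - y3^2) with hs3def
  set s4 := Real.sqrt (4 - y4^2) with hs4def
  have hs1 : s1^2 = 4 - y1^2 := Real.sq_sqrt (by nlinarith)
  have hs2 : s2^2 = 4 - y2^2 := Real.sq_sqrt (by nlinarith)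
  have hs3 : s3^2 = 4 - y3^2 := Real.sq_sqrt (by nlinarith)
  have hs4 : s4^2 = 4 - y4^2 := Real.sq_sqrt (by nlinarith)
  -- complex factorization of lehmer into linear factors
  have hmap : lehmer = lehmerR.map (algebraMap ℝ ℂ) := by
    simp [lehmer, lehmerR, Polynomial.map_add, Polynomial.map_sub, Polynomial.map_pow,
      Polynomial.map_one, Polynomial.map_X]
  have hCfac : lehmer = (X^2 - C (y1:ℂ) * X + 1) * (X^2 - C (y2:ℂ) * X + 1) *
      (X^2 - C (y3:ℂ) * X + 1) * (X^2 - C (y4:ℂ) * X + 1) * (X^2 - C (y5:ℂ) * X + 1) := by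
    rw [hmap, hLfac]
    simp [Polynomial.map_mul, Polynomial.map_add, Polynomial.map_sub, Polynomial.map_pow,
      Polynomial.map_one, Polynomial.map_X, Polynomial.map_C]
  have hσfacC : (X^2 - C ((y5:ℝ):ℂ) * X + 1 : Polynomial ℂ)
      = (X - C (σ:ℂ)) * (X - C ((σ:ℂ)⁻¹)) := by
    rw [quad_fac]
    have e1 : ((σ:ℂ)) + ((σ:ℂ))⁻¹ = ((y5:ℝ):ℂ) := by
      rw [hy5def]; push_cast; ring
    have e2 : ((σ:ℂ)) * ((σ:ℂ))⁻¹ = 1 :=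
      mul_inv_cancel₀ (by exact_mod_cast hσne)
    rw [e1, e2, C_1]
  set z1 : ℂ := ⟨y1/2, s1/2⟩
  set w1 : ℂ := ⟨y1/2, -(s1/2)⟩
  set z2 : ℂ := ⟨y2/2, s2/2⟩
  set w2 : ℂ := ⟨y2/2, -(s2/2)⟩
  set z3 : ℂ := ⟨y3/2, s3/2⟩
  set w3 : ℂ := ⟨y3/2, -(s3/2)⟩
  set z4 : ℂ := ⟨y4/2, s4/2⟩
  set w4 : ℂ := ⟨y4/2, -(s4/2)⟩
  set M : Multiset ℂ := {z1, w1, z2, w2, z3, w3, z4, w4, (σ:ℂ), ((σ:ℂ))⁻¹} with hM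
  have hlin : lehmer = (M.map fun a => X - C a).prod := by
    rw [hCfac, quad_fac_unit y1 s1 hs1, quad_fac_unit y2 s2 hs2, quad_fac_unit y3 s3 hs3,
      quad_fac_unit y4 s4 hs4, hσfacC, hM]
    simp only [Multiset.insert_eq_cons, Multiset.map_cons, Multiset.prod_cons,
      Multiset.map_singleton, Multiset.prod_singleton]
    ring
  have hroots : lehmer.roots = M := by
    rw [hlin]; exact roots_multiset_prod_X_sub_C M
  -- absolute values
  have habsz1 : ‖z1‖ = 1 := abs_one_mk _ _ (by nlinarith)
  have habsw1 : ‖w1‖ = 1 := abs_one_mk _ _ (by nlinarith)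
  have habsz2 : ‖z2‖ = 1 := abs_one_mk _ _ (by nlinarith)
  have habsw2 : ‖w2‖ = 1 := abs_one_mk _ _ (by nlinarith)
  have habsz3 : ‖z3‖ = 1 := abs_one_mk _ _ (by nlinarith)
  have habsw3 : ‖w3‖ = 1 := abs_one_mk _ _ (by nlinarith)
  have habsz4 : ‖z4‖ = 1 := abs_one_mk _ _ (by nlinarith)
  have habsw4 : ‖w4‖ = 1 := abs_one_mk _ _ (by nlinarith)
  have habsσ : ‖(σ:ℂ)‖ = σ := by
    rw [Complex.norm_real, Real.norm_eq_abs]; exact abs_of_pos hσpos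
  have habsσinv : ‖((σ:ℂ))⁻¹‖ = σ⁻¹ := by
    rw [norm_inv, habsσ]
  have hinvlt : σ⁻¹ < 1 := inv_lt_one_of_one_lt₀ hσ1
  refine ⟨(σ:ℂ), ?_, ?_, ?_, ?_, ?_, ?_⟩
  · rw [hroots, hM]; simp
  · rw [habsσ]; linarith
  · intro s hs h1s
    rw [hroots, hM] at hs
    simp only [Multiset.insert_eq_cons, Multiset.mem_cons, Multiset.mem_singleton] at hs
    rcases hs with rfl | rfl | rfl | rfl | rfl | rfl | rfl | rfl | rfl | rfl
    · rw [habsz1] at h1s; linarith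
    · rw [habsw1] at h1s; linarith
    · rw [habsz2] at h1s; linarith
    · rw [habsw2] at h1s; linarith
    · rw [habsz3] at h1s; linarith
    · rw [habsw3] at h1s; linarith
    · rw [habsz4] at h1s; linarith
    · rw [habsw4] at h1s; linarith
    · rfl
    · rw [habsσinv] at h1s; linarith
  · rw [hroots, hM]
    simp only [Multiset.insert_eq_cons, Multiset.map_cons, Multiset.prod_cons,
      Multiset.map_singleton, Multiset.prod_singleton]
    rw [habsz1, habsw1, habsz2, habsw2, habsz3, habsw3, habsz4, habsw4, habsσ, habsσinv]
    rw [max_eq_left (le_of_lt hσ1), max_eq_right (le_of_lt hinvlt), max_self]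
    ring
  · rw [habsσ]; exact hσa
  · rw [habsσ]; exact hσb
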